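/- For every s ∈ Γ and every y ∈ Δ_Γ with y ≠ e, one has ‖λ(s)ξ_y − ξ_{s·y}‖₂² ≤ 2 · l_Γ(s) · n(y)/w(y), where s·y is the Bernoulli shift of y by s. -/

import Mathlib

open Function

/-- A proper length function on a group. -/
structure IsProperLength {G : Type*} [Group G] (l : G → ℝ) : Prop where
  nonneg : ∀ s, 0 ≤ l s
  eq_zero_iff : ∀ s, l s = 0 ↔ s = 1
  mul_le : ∀ s t, l (s * t) ≤ l s + l t
  inv_eq : ∀ s, l s⁻¹ = l s
  proper : ∀ R : ℝ, {s : G | l s ≤ R}.Finite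

open Classical in
/-- `w(y,t) = l_Γ(t) + l_Δ(y t)` if `t ∈ supp y`, and `0` otherwise. -/
noncomputable def wt {Γ Δ : Type*} [Group Δ] (lG : Γ → ℝ) (lD : Δ → ℝ)
    (y : Γ → Δ) (t : Γ) : ℝ :=
  if y t ≠ 1 then lG t + lD (y t) else 0

/-- `w(y) = Σ_t w(y,t)`. -/
noncomputable def w {Γ Δ : Type*} [Group Δ] (lG : Γ → ℝ) (lD : Δ → ℝ)
    (y : Γ → Δ) : ℝ :=
  ∑ᶠ t, wt lG lD y t

/-- The coefficients of the unit vector `ξ_y ∈ ℓ²(Γ)`: `ξ_y(t) = (w(y,t)/w(y))^{1/2}`. -/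
noncomputable def xi {Γ Δ : Type*} [Group Δ] (lG : Γ → ℝ) (lD : Δ → ℝ)
    (y : Γ → Δ) (t : Γ) : ℝ :=
  Real.sqrt (wt lG lD y t / w lG lD y)

/-- `(√x − √z)² ≤ |x − z|` for nonnegative reals. -/
lemma sqrt_sub_sq_le {x z : ℝ} (hx : 0 ≤ x) (hz : 0 ≤ z) :
    (Real.sqrt x - Real.sqrt z) ^ 2 ≤ |x - z| := by
  have hp := Real.sqrt_nonneg x
  have hq := Real.sqrt_nonneg z
  have hx' := Real.sq_sqrt hx
  have hz' := Real.sq_sqrt hz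
  rcases abs_cases (x - z) with ⟨h, h'⟩ | ⟨h, h'⟩ <;> rw [h]
  · have hle : Real.sqrt z ≤ Real.sqrt x := Real.sqrt_le_sqrt (by linarith)
    nlinarith [mul_le_mul_of_nonneg_right hle hq]
  · have hle : Real.sqrt x ≤ Real.sqrt z := Real.sqrt_le_sqrt (by linarith)
    nlinarith [mul_le_mul_of_nonneg_right hle hp]

/-- For every `s ∈ Γ` and `y ∈ Δ_Γ` with `y ≠ e`,
`‖λ(s)ξ_y − ξ_{s·y}‖₂² ≤ 2 l_Γ(s) n(y)/w(y)`, where `(s·y)(t) = y(s⁻¹t)` is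
the Bernoulli shift and `(λ(s)ξ)(t) = ξ(s⁻¹t)`. -/
theorem stmt1 {Γ Δ : Type*} [Group Γ] [Group Δ] [Countable Γ] [Countable Δ]
    (lG : Γ → ℝ) (lD : Δ → ℝ) (hG : IsProperLength lG) (hD : IsProperLength lD)
    (s : Γ) (y : Γ → Δ) (hy : (mulSupport y).Finite) (hy1 : y ≠ 1) :
    (∑' t : Γ, (xi lG lD y (s⁻¹ * t) - xi lG lD (fun t' => y (s⁻¹ * t')) t) ^ 2)
      ≤ 2 * lG s * (Nat.card (mulSupport y)) / w lG lD y := by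
  classical
  set y' : Γ → Δ := fun t' => y (s⁻¹ * t') with hy'def
  set F : Finset Γ := hy.toFinset with hF
  have hmemF : ∀ u, u ∈ F ↔ y u ≠ 1 := by
    intro u; simp [hF, Set.Finite.mem_toFinset, mulSupport]
  set a : Γ → ℝ := fun u => wt lG lD y u with ha
  set b : Γ → ℝ := fun u => wt lG lD y' (s * u) with hb
  have hb_eq : ∀ u, y u ≠ 1 → b u = lG (s * u) + lD (y u) := by
    intro u hu
    simp only [hb, wt, hy'def, inv_mul_cancel_left, if_pos hu]
  have ha_eq : ∀ u, y u ≠ 1 → a u = lG u + lD (y u) := by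
    intro u hu; simp only [ha, wt, if_pos hu]
  have ha0 : ∀ u, y u = 1 → a u = 0 := by intro u hu; simp [ha, wt, hu]
  have hb0 : ∀ u, y u = 1 → b u = 0 := by intro u hu; simp [hb, wt, hy'def, hu]
  have hanon : ∀ u, 0 ≤ a u := by
    intro u; by_cases hu : y u = 1
    · rw [ha0 u hu]
    · rw [ha_eq u hu]; exact add_nonneg (hG.nonneg u) (hD.nonneg _)
  have hbnon : ∀ u, 0 ≤ b u := by
    intro u; by_cases hu : y u = 1
    · rw [hb0 u hu]
    · rw [hb_eq u hu]; exact add_nonneg (hG.nonneg _) (hD.nonneg _)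
  have hA : w lG lD y = ∑ u ∈ F, a u := by
    apply finsum_eq_finset_sum_of_support_subset
    intro u hu
    rw [Function.mem_support] at hu
    rw [hF, Set.Finite.coe_toFinset]
    by_contra hc
    exact hu (ha0 u (by simpa [mulSupport] using hc))
  have hinj : ∀ x ∈ F, ∀ z ∈ F, s * x = s * z → x = z := by
    intro x _ z _ h; exact mul_left_cancel h
  have hB : w lG lD y' = ∑ u ∈ F, b u := by
    have h1 : w lG lD y' = ∑ t ∈ F.image (fun u => s * u), wt lG lD y' t := by
      apply finsum_eq_finset_sum_of_support_subset
      intro t ht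
      rw [Function.mem_support] at ht
      simp only [Finset.coe_image, Set.mem_image, Finset.mem_coe]
      refine ⟨s⁻¹ * t, ?_, by group⟩
      rw [hmemF]
      intro hc
      exact ht (by simp [wt, hy'def, hc])
    rw [h1, Finset.sum_image hinj]
  set A := w lG lD y with hAdef
  set B := w lG lD y' with hBdef
  obtain ⟨u₀, hu₀⟩ : ∃ u, y u ≠ 1 := by
    by_contra hc; push_neg at hc; exact hy1 (funext fun u => hc u)
  have hlDpos : 0 < lD (y u₀) := lt_of_le_of_ne (hD.nonneg _)
    (fun h => hu₀ ((hD.eq_zero_iff _).1 h.symm))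
  have hApos : 0 < A := by
    rw [hA]
    apply Finset.sum_pos' (fun i _ => hanon i)
    refine ⟨u₀, (hmemF u₀).2 hu₀, ?_⟩
    rw [ha_eq u₀ hu₀]
    linarith [hG.nonneg u₀]
  have hBpos : 0 < B := by
    rw [hB]
    apply Finset.sum_pos' (fun i _ => hbnon i)
    refine ⟨u₀, (hmemF u₀).2 hu₀, ?_⟩
    rw [hb_eq u₀ hu₀]
    linarith [hG.nonneg (s * u₀)]
  have htsum : (∑' t : Γ, (xi lG lD y (s⁻¹ * t) - xi lG lD y' t) ^ 2)
      = ∑ u ∈ F, (Real.sqrt (a u / A) - Real.sqrt (b u / B)) ^ 2 := by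
    rw [tsum_eq_sum (s := F.image (fun u => s * u)) ?_, Finset.sum_image hinj]
    · apply Finset.sum_congr rfl
      intro u hu
      simp only [xi, inv_mul_cancel_left]
      rfl
    · intro t ht
      have h1 : y (s⁻¹ * t) = 1 := by
        by_contra hc
        exact ht (Finset.mem_image.2 ⟨s⁻¹ * t, (hmemF _).2 hc, by group⟩)
      have h0 : wt lG lD y (s⁻¹ * t) = 0 := by simp [wt, h1]
      have h2 : wt lG lD y' t = 0 := by simp [wt, hy'def, h1]
      simp [xi, h0, h2, ← hAdef, ← hBdef]
  rw [htsum]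
  have key : ∀ u ∈ F, (Real.sqrt (a u / A) - Real.sqrt (b u / B)) ^ 2
      ≤ |a u - b u| / A + b u * |B - A| / (A * B) := by
    intro u _
    have h1 := sqrt_sub_sq_le (div_nonneg (hanon u) hApos.le) (div_nonneg (hbnon u) hBpos.le)
    refine h1.trans ?_
    have heq : a u / A - b u / B = (a u - b u) / A + b u * (B - A) / (A * B) := by
      field_simp; ring
    rw [heq]
    refine (abs_add_le _ _).trans ?_
    rw [abs_div, abs_of_pos hApos, abs_div, abs_of_pos (mul_pos hApos hBpos), abs_mul,
      abs_of_nonneg (hbnon u)]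
  have habs : ∀ u ∈ F, |a u - b u| ≤ lG s := by
    intro u hu
    have hu' := (hmemF u).1 hu
    rw [ha_eq u hu', hb_eq u hu']
    have h1 : lG (s * u) ≤ lG s + lG u := hG.mul_le s u
    have h2 : lG u ≤ lG s + lG (s * u) := by
      have := hG.mul_le s⁻¹ (s * u)
      rw [inv_mul_cancel_left, hG.inv_eq] at this
      exact this
    rw [abs_le]
    constructor <;> linarith
  have hsum1 : ∑ u ∈ F, |a u - b u| ≤ (F.card : ℝ) * lG s := by
    have := Finset.sum_le_card_nsmul F (fun u => |a u - b u|) (lG s) habs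
    simpa [nsmul_eq_mul] using this
  have hBA : |B - A| ≤ (F.card : ℝ) * lG s := by
    rw [hA, hB, ← Finset.sum_sub_distrib]
    refine (Finset.abs_sum_le_sum_abs _ _).trans (le_trans ?_ hsum1)
    apply le_of_eq
    exact Finset.sum_congr rfl fun u _ => abs_sub_comm _ _
  have hcard : ((Nat.card (mulSupport y) : ℝ)) = (F.card : ℝ) := by
    rw [Nat.card_coe_set_eq, Set.ncard_eq_toFinset_card _ hy]
  calc ∑ u ∈ F, (Real.sqrt (a u / A) - Real.sqrt (b u / B)) ^ 2
      ≤ ∑ u ∈ F, (|a u - b u| / A + b u * |B - A| / (A * B)) := Finset.sum_le_sum key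
    _ = (∑ u ∈ F, |a u - b u|) / A + (∑ u ∈ F, b u) * |B - A| / (A * B) := by
        rw [Finset.sum_add_distrib, ← Finset.sum_div, ← Finset.sum_div, ← Finset.sum_mul]
    _ = (∑ u ∈ F, |a u - b u|) / A + |B - A| / A := by
        rw [← hB]
        congr 1
        field_simp
    _ ≤ ((F.card : ℝ) * lG s) / A + ((F.card : ℝ) * lG s) / A := by
        gcongr
    _ = 2 * lG s * (F.card : ℝ) / A := by ring
    _ = 2 * lG s * (Nat.card (mulSupport y)) / A := by rw [hcard]
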